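/- Let θ_c' be the unique real root of t³ + t² + 3t − 1 = 0 and let 0 < θ ≤ θ_c'. Let x > 0 be such that ξ = x + 1/x satisfies θ³ξ² + θ(3θ² − 1)ξ + 2θ³ − 2θ + 1 = 0, and set y = √(((1 − θ²)x − θ²(x² + 1))/θ). Then (x, y) is a solution of the boundary-law system x = (x² + θy² + θ²)/(θ²x² + θy² + 1) and y = (θx² + y² + θ)/(θ²x² + θy² + 1), and x ≠ 1. -/

import Mathlib

/-- If `θ_c'` is the unique real root of `t³ + t² + 3t - 1 = 0`,
`0 < θ ≤ θ_c'`, `x > 0` is such that `ξ = x + 1/x` solves the quadratic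
`θ³ξ² + θ(3θ² - 1)ξ + 2θ³ - 2θ + 1 = 0`, and `y = √(((1 - θ²)x - θ²(x² + 1))/θ)`,
then `(x, y)` solves the boundary-law system and `x ≠ 1`. -/
theorem sos_nonsymmetric_solutions (θc' θ x : ℝ)
    (hroot : θc' ^ 3 + θc' ^ 2 + 3 * θc' - 1 = 0)
    (huniq : ∀ t : ℝ, t ^ 3 + t ^ 2 + 3 * t - 1 = 0 → t = θc')
    (hθ0 : 0 < θ) (hθ : θ ≤ θc') (hx : 0 < x)
    (hξ : θ ^ 3 * (x + 1 / x) ^ 2 + θ * (3 * θ ^ 2 - 1) * (x + 1 / x)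
        + 2 * θ ^ 3 - 2 * θ + 1 = 0) :
    let y : ℝ := Real.sqrt (((1 - θ ^ 2) * x - θ ^ 2 * (x ^ 2 + 1)) / θ)
    x = (x ^ 2 + θ * y ^ 2 + θ ^ 2) / (θ ^ 2 * x ^ 2 + θ * y ^ 2 + 1) ∧
    y = (θ * x ^ 2 + y ^ 2 + θ) / (θ ^ 2 * x ^ 2 + θ * y ^ 2 + 1) ∧
    x ≠ 1 := by
  intro y
  have hθc : θc' < 3/10 := by nlinarith [sq_nonneg (θc' - 3/10), sq_nonneg θc']
  have hθ3 : θ < 3/10 := lt_of_le_of_lt hθ hθc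
  have hxne : x ≠ 0 := ne_of_gt hx
  have hθne : θ ≠ 0 := ne_of_gt hθ0
  -- cleared-denominator form of the quadratic
  have hkey : θ^3*(x^2+1)^2 + θ*(3*θ^2-1)*x*(x^2+1) + (2*θ^3-2*θ+1)*x^2 = 0 := by
    have h : x * (θ^3*(x^2+1)^2 + θ*(3*θ^2-1)*x*(x^2+1) + (2*θ^3-2*θ+1)*x^2) = 0 := by
      field_simp at hξ
      linear_combination x * hξ
    rcases mul_eq_zero.mp h with h' | h'
    · exact absurd h' hxne
    · exact h'
  have hx1 : x ≠ 1 := by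
    intro h
    rw [h] at hkey
    nlinarith [sq_nonneg θ, sq_nonneg (θ - 1/3), hθ0.le]
  have hxp1 : x + 1 ≠ 0 := by positivity
  -- the radicand is an explicit square
  have hs' : ((1 - θ ^ 2) * x - θ ^ 2 * (x ^ 2 + 1)) * θ * (x + 1)^2 = x^2 := by
    linear_combination -hkey
  have hs : ((1 - θ ^ 2) * x - θ ^ 2 * (x ^ 2 + 1)) / θ = (x / (θ * (x + 1)))^2 := by
    rw [div_pow, div_eq_div_iff hθne (pow_ne_zero 2 (mul_ne_zero hθne hxp1))]
    linear_combination θ * hs'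
  have hy : y = x / (θ * (x + 1)) := by
    show Real.sqrt _ = _
    rw [hs, Real.sqrt_sq (by positivity)]
  have hy2 : y ^ 2 = ((1 - θ ^ 2) * x - θ ^ 2 * (x ^ 2 + 1)) / θ := by
    rw [hy, hs]
  have hθ1 : θ < 1 := by linarith
  -- denominator
  have hD : θ ^ 2 * x ^ 2 + θ * y ^ 2 + 1 = (1 - θ^2) * (x + 1) := by
    rw [hy2]; field_simp; ring
  have hDne : (1 - θ^2) * (x + 1) ≠ 0 := by
    have : (0:ℝ) < (1 - θ^2) * (x + 1) := by nlinarith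
    exact ne_of_gt this
  refine ⟨?_, ?_, hx1⟩
  · rw [hD, eq_div_iff hDne, hy2]
    field_simp
    ring
  · rw [hD, eq_div_iff hDne, hy]
    field_simp
    linear_combination (-1) * hkey
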